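/- The profile p_0 is the unique subgame perfect equilibrium of the ∞pede: for every finite-or-infinite strategy profile s, (s =_g p_0 ∧ SPE(s)) if and only if s = p_0. -/
import Mathlib


noncomputable section

/-- The two agents. -/
inductive Ag : Type
  | A
  | B
deriving DecidableEq

/-- The set of choices `{1, 2}`. -/
inductive Choice : Type
  | one
  | two
deriving DecidableEq

/-- The polynomial functor whose final coalgebra is the set of finite or
infinite strategy profiles: a node is either an ending position carrying a
utility assignment (no children) or an internal position carrying an agent
and a choice (two children, indexed by `Bool`). -/
def SPF (Agent : Type) : PFunctor.{0} :=
  ⟨(Agent → ℝ) ⊕ (Agent × Choice), fun x => Sum.rec (fun _ => Empty) (fun _ => Bool) x⟩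

/-- Finite or infinite strategy profiles, as the M-type (final coalgebra). -/
def StratProf (Agent : Type) : Type :=
  (SPF Agent).M

/-- The ending position `⟨u⟩`. -/
def leafP {Agent : Type} (u : Agent → ℝ) : StratProf Agent :=
  PFunctor.M.mk ⟨Sum.inl u, fun e => Empty.elim e⟩

/-- The strategy profile `⟨a, c, s₁, s₂⟩`. -/
def nodeP {Agent : Type} (a : Agent) (c : Choice) (s₁ s₂ : StratProf Agent) :
    StratProf Agent :=
  PFunctor.M.mk ⟨Sum.inr (a, c), fun b => bif b then s₂ else s₁⟩

/-- The child selected by choice `c`. -/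
def cchild {Agent : Type} (c : Choice) (s₁ s₂ : StratProf Agent) : StratProf Agent :=
  match c with
  | .one => s₁
  | .two => s₂

/-- `conv s`: following the choices of `s` reaches an ending position after
finitely many steps (inductive definition). -/
inductive Conv {Agent : Type} : StratProf Agent → Prop
  | leaf (u : Agent → ℝ) : Conv (leafP u)
  | node1 (a : Agent) (s₁ s₂ : StratProf Agent) :
      Conv s₁ → Conv (nodeP a Choice.one s₁ s₂)
  | node2 (a : Agent) (s₁ s₂ : StratProf Agent) :
      Conv s₂ → Conv (nodeP a Choice.two s₁ s₂)

/-- The graph of the (partial) utility assignment `ŝ`: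
`UtilR s u` holds iff following the choices of `s` reaches the ending
position `⟨u⟩`. -/
inductive UtilR {Agent : Type} : StratProf Agent → (Agent → ℝ) → Prop
  | leaf (u : Agent → ℝ) : UtilR (leafP u) u
  | node1 (a : Agent) (s₁ s₂ : StratProf Agent) (u : Agent → ℝ) :
      UtilR s₁ u → UtilR (nodeP a Choice.one s₁ s₂) u
  | node2 (a : Agent) (s₁ s₂ : StratProf Agent) (u : Agent → ℝ) :
      UtilR s₂ u → UtilR (nodeP a Choice.two s₁ s₂) u

open Classical in
/-- The utility assignment `ŝ` (an arbitrary default on non-convergent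
profiles). -/
def util {Agent : Type} (s : StratProf Agent) : Agent → ℝ :=
  if h : ∃ u, UtilR s u then h.choose else fun _ => 0

/-- `□P`, the coinductive `always` modality: `P` holds at every position of
the strategy profile (greatest fixed point). -/
def Always {Agent : Type} (P : StratProf Agent → Prop) (s : StratProf Agent) : Prop :=
  ∃ R : StratProf Agent → Prop, R s ∧ ∀ t, R t →
    P t ∧ ∀ a c s₁ s₂, t = nodeP a c s₁ s₂ → R s₁ ∧ R s₂

/-- `PE s`: `s` is always-convergent and the choice at the root of `s` is at
least as good, for the agent who owns the root, as the other choice. -/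
def PE {Agent : Type} (s : StratProf Agent) : Prop :=
  Always Conv s ∧
    (∀ a s₁ s₂, s = nodeP a Choice.one s₁ s₂ → util s₁ a ≥ util s₂ a) ∧
    (∀ a s₁ s₂, s = nodeP a Choice.two s₁ s₂ → util s₂ a ≥ util s₁ a)

/-- Subgame perfect equilibrium: `□PE`. -/
def SPE {Agent : Type} : StratProf Agent → Prop :=
  Always PE

/-- `s =_g s'`: the two strategy profiles have the same underlying game
(coinductive definition). -/
def SameGame {Agent : Type} (s s' : StratProf Agent) : Prop :=
  ∃ R : StratProf Agent → StratProf Agent → Prop, R s s' ∧ ∀ t t', R t t' →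
    (∃ u, t = leafP u ∧ t' = leafP u) ∨
    (∃ a c c' s₁ s₂ s₁' s₂',
      t = nodeP a c s₁ s₂ ∧ t' = nodeP a c' s₁' s₂' ∧ R s₁ s₁' ∧ R s₂ s₂')

/-- `Rat_∞`: rationality for finite or infinite strategy profiles
(coinductive definition). -/
def RatInf {Agent : Type} (s : StratProf Agent) : Prop :=
  ∃ R : StratProf Agent → Prop, R s ∧ ∀ t, R t →
    (∃ u, t = leafP u) ∨
    (∃ a c s₁ s₂ s₁' s₂', t = nodeP a c s₁ s₂ ∧
      SameGame (nodeP a c s₁' s₂') (nodeP a c s₁ s₂) ∧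
      SPE (nodeP a c s₁' s₂') ∧ R (cchild c s₁ s₂))

/-- `diverg`: following the choices never reaches an ending position
(coinductive definition). -/
def Diverg {Agent : Type} (s : StratProf Agent) : Prop :=
  ∃ R : StratProf Agent → Prop, R s ∧ ∀ t, R t →
    ∃ a c s₁ s₂, t = nodeP a c s₁ s₂ ∧ R (cchild c s₁ s₂)

/-- Utilities of the leaf reached when Alice takes at her `n`-th position of
the ∞pede: `A ↦ 2^(2n+2)`, `B ↦ 2^(2n)`. -/
def uAp (n : ℕ) : Ag → ℝ := fun x =>
  match x with
  | Ag.A => (2 : ℝ) ^ (2 * n + 2)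
  | Ag.B => (2 : ℝ) ^ (2 * n)

/-- Utilities of the leaf reached when Bob takes at his `n`-th position of
the ∞pede: `A ↦ 2^(2n+1)`, `B ↦ 2^(2n+3)`. -/
def uBp (n : ℕ) : Ag → ℝ := fun x =>
  match x with
  | Ag.A => (2 : ℝ) ^ (2 * n + 1)
  | Ag.B => (2 : ℝ) ^ (2 * n + 3)

/-- States for the mutual corecursion defining the `always take` profiles
`p_n` and `π_n` of the ∞pede. -/
inductive PedSt : Type
  | pS (n : ℕ)
  | piS (n : ℕ)
  | lS (u : Ag → ℝ)

/-- One step of the corecursion: `p_n = ⟨A, 1, ⟨A↦2^(2n+2), B↦2^(2n)⟩, π_n⟩`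
and `π_n = ⟨B, 1, ⟨A↦2^(2n+1), B↦2^(2n+3)⟩, p_{n+1}⟩`. -/
def pedStep : PedSt → (SPF Ag).Obj PedSt
  | PedSt.lS u => ⟨Sum.inl u, fun e => Empty.elim e⟩
  | PedSt.pS n =>
      ⟨Sum.inr (Ag.A, Choice.one), fun b => bif b then PedSt.piS n else PedSt.lS (uAp n)⟩
  | PedSt.piS n =>
      ⟨Sum.inr (Ag.B, Choice.one), fun b => bif b then PedSt.pS (n + 1) else PedSt.lS (uBp n)⟩

/-- The ∞pede profile `p_n` where both agents always take. -/
def pped (n : ℕ) : StratProf Ag :=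
  PFunctor.M.corec pedStep (PedSt.pS n)

/-- The ∞pede profile `π_n` where both agents always take. -/
def piped (n : ℕ) : StratProf Ag :=
  PFunctor.M.corec pedStep (PedSt.piS n)

section Lemmas

open PFunctor

variable {Agent : Type}

lemma dest_leafP (u : Agent → ℝ) :
    M.dest (leafP u) = ⟨Sum.inl u, fun e => Empty.elim e⟩ :=
  M.dest_mk _

lemma dest_nodeP (a : Agent) (c : Choice) (s₁ s₂ : StratProf Agent) :
    M.dest (nodeP a c s₁ s₂) = ⟨Sum.inr (a, c), fun b => bif b then s₂ else s₁⟩ :=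
  M.dest_mk _

lemma leafP_inj {u v : Agent → ℝ} (h : leafP u = leafP v) : u = v := by
  have h2 := M.mk_inj (F := SPF Agent) h
  exact Sum.inl.inj (congrArg Sigma.fst h2)

lemma leaf_ne_node (u : Agent → ℝ) (a : Agent) (c : Choice) (s₁ s₂ : StratProf Agent) :
    leafP u ≠ nodeP a c s₁ s₂ := by
  intro h
  have h2 := congrArg Sigma.fst (M.mk_inj (F := SPF Agent) h)
  simp at h2

lemma nodeP_inj {a a' : Agent} {c c' : Choice} {s₁ s₂ s₁' s₂' : StratProf Agent}
    (h : nodeP a c s₁ s₂ = nodeP a' c' s₁' s₂') :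
    a = a' ∧ c = c' ∧ s₁ = s₁' ∧ s₂ = s₂' := by
  have h2 := M.mk_inj (F := SPF Agent) h
  have h3 := congrArg Sigma.fst h2
  simp only at h3
  obtain ⟨ha, hc⟩ := Prod.mk.injEq .. ▸ (Sum.inr.inj h3)
  subst ha; subst hc
  have h4 : (fun b => bif b then s₂ else s₁) = (fun b => bif b then s₂' else s₁') := by
    have := Sigma.mk.inj_iff.mp h2
    exact eq_of_heq this.2
  exact ⟨rfl, rfl, congrFun h4 false, congrFun h4 true⟩

/-- Every strategy profile is a leaf or a node. -/
lemma strat_cases (t : StratProf Agent) :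
    (∃ u, t = leafP u) ∨ ∃ a c s₁ s₂, t = nodeP a c s₁ s₂ := by
  have ht : t = M.mk (M.dest t) := (M.mk_dest t).symm
  rcases hd : M.dest t with ⟨x, f⟩
  rcases x with u | ⟨a, c⟩
  · left
    refine ⟨u, ?_⟩
    rw [ht, hd]
    unfold leafP
    congr 1
    congr 1
    funext e; exact e.elim
  · right
    refine ⟨a, c, f false, f true, ?_⟩
    rw [ht, hd]
    unfold nodeP
    congr 1
    congr 1
    funext b; cases b <;> rfl

/-- Unfolding of `pped`. -/
lemma corec_lS (u : Ag → ℝ) : M.corec pedStep (PedSt.lS u) = leafP u := by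
  have h : M.corec pedStep (PedSt.lS u) = M.mk (M.dest (M.corec pedStep (PedSt.lS u))) :=
    (M.mk_dest _).symm
  rw [h, M.dest_corec]
  unfold leafP
  congr 1
  show Sigma.mk (Sum.inl u) _ = _
  congr 1
  funext e; exact e.elim

lemma pped_eq (n : ℕ) : pped n = nodeP Ag.A Choice.one (leafP (uAp n)) (piped n) := by
  have h : pped n = M.mk (M.dest (pped n)) := (M.mk_dest _).symm
  rw [h]
  unfold pped
  rw [M.dest_corec]
  unfold nodeP
  congr 1
  show Sigma.mk (Sum.inr (Ag.A, Choice.one)) _ = _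
  congr 1
  funext b
  cases b
  · exact corec_lS (uAp n)
  · rfl

lemma piped_eq (n : ℕ) : piped n = nodeP Ag.B Choice.one (leafP (uBp n)) (pped (n + 1)) := by
  have h : piped n = M.mk (M.dest (piped n)) := (M.mk_dest _).symm
  rw [h]
  unfold piped
  rw [M.dest_corec]
  unfold nodeP
  congr 1
  show Sigma.mk (Sum.inr (Ag.B, Choice.one)) _ = _
  congr 1
  funext b
  cases b
  · exact corec_lS (uBp n)
  · rfl

end Lemmas

section Lemmas2

open PFunctor

variable {Agent : Type}

lemma always_self {P : StratProf Agent → Prop} {s : StratProf Agent} (h : Always P s) : P s := by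
  obtain ⟨R, hR, hcl⟩ := h
  exact (hcl s hR).1

lemma always_children {P : StratProf Agent → Prop} {a c s₁ s₂}
    (h : Always P (nodeP a c s₁ s₂)) : Always P s₁ ∧ Always P s₂ := by
  obtain ⟨R, hR, hcl⟩ := h
  obtain ⟨h1, h2⟩ := (hcl _ hR).2 a c s₁ s₂ rfl
  exact ⟨⟨R, h1, hcl⟩, ⟨R, h2, hcl⟩⟩

lemma spe_children {a c} {s₁ s₂ : StratProf Agent}
    (h : SPE (nodeP a c s₁ s₂)) : SPE s₁ ∧ SPE s₂ := always_children h

lemma conv_of_spe {s : StratProf Agent} (h : SPE s) : Conv s :=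
  always_self (always_self h).1

lemma utilR_inv {s : StratProf Agent} {v : Agent → ℝ} (h : UtilR s v) :
    (∀ u, s = leafP u → v = u) ∧
    (∀ a c s₁ s₂, s = nodeP a c s₁ s₂ → UtilR (cchild c s₁ s₂) v) := by
  cases h with
  | leaf u =>
    refine ⟨fun u' hu => (leafP_inj hu).symm ▸ rfl, fun a c s₁ s₂ hh => absurd hh (leaf_ne_node _ _ _ _ _)⟩
  | node1 a s₁ s₂ u h =>
    constructor
    · intro u' hu; exact absurd hu.symm (leaf_ne_node _ _ _ _ _)
    · intro a' c' s₁' s₂' hh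
      obtain ⟨_, hc, h1, _⟩ := nodeP_inj hh
      subst h1
      cases hc
      exact h
  | node2 a s₁ s₂ u h =>
    constructor
    · intro u' hu; exact absurd hu.symm (leaf_ne_node _ _ _ _ _)
    · intro a' c' s₁' s₂' hh
      obtain ⟨_, hc, _, h2⟩ := nodeP_inj hh
      subst h2
      cases hc
      exact h

/-- `UtilR` is deterministic. -/
lemma utilR_det {s : StratProf Agent} {u v : Agent → ℝ} (hu : UtilR s u) (hv : UtilR s v) :
    u = v := by
  induction hu generalizing v with
  | leaf w => exact ((utilR_inv hv).1 w rfl).symm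
  | node1 a s₁ s₂ w h ih => exact ih ((utilR_inv hv).2 a Choice.one s₁ s₂ rfl)
  | node2 a s₁ s₂ w h ih => exact ih ((utilR_inv hv).2 a Choice.two s₁ s₂ rfl)

lemma util_eq {s : StratProf Agent} {u : Agent → ℝ} (h : UtilR s u) : util s = u := by
  unfold util
  rw [dif_pos ⟨u, h⟩]
  exact utilR_det (Exists.choose_spec (⟨u, h⟩ : ∃ u, UtilR s u)) h

lemma util_leaf (u : Agent → ℝ) : util (leafP u) = u := util_eq (UtilR.leaf u)

lemma utilR_pped (n : ℕ) : UtilR (pped n) (uAp n) := by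
  rw [pped_eq]
  exact UtilR.node1 _ _ _ _ (UtilR.leaf _)

lemma utilR_piped (n : ℕ) : UtilR (piped n) (uBp n) := by
  rw [piped_eq]
  exact UtilR.node1 _ _ _ _ (UtilR.leaf _)

/-- SameGame inversion at a node. -/
lemma sameGame_node_inv {s : StratProf Agent} {a c' s₁' s₂'}
    (h : SameGame s (nodeP a c' s₁' s₂')) :
    ∃ c s₁ s₂, s = nodeP a c s₁ s₂ ∧ SameGame s₁ s₁' ∧ SameGame s₂ s₂' := by
  obtain ⟨R, hR, hcl⟩ := h
  rcases hcl _ _ hR with ⟨u, _, h2⟩ | ⟨a₀, c₀, c₀', t₁, t₂, t₁', t₂', hs, ht, h1, h2⟩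
  · exact absurd h2.symm (leaf_ne_node _ _ _ _ _)
  · obtain ⟨ha, hc, h1', h2'⟩ := nodeP_inj ht
    subst ha
    refine ⟨c₀, t₁, t₂, hs, ?_, ?_⟩
    · exact ⟨R, h1' ▸ h1, hcl⟩
    · exact ⟨R, h2' ▸ h2, hcl⟩

lemma sameGame_leaf_inv {s : StratProf Agent} {u}
    (h : SameGame s (leafP u)) : s = leafP u := by
  obtain ⟨R, hR, hcl⟩ := h
  rcases hcl _ _ hR with ⟨v, h1, h2⟩ | ⟨a₀, c₀, c₀', t₁, t₂, t₁', t₂', hs, ht, _, _⟩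
  · rw [h1, leafP_inj h2.symm]
  · exact absurd ht (leaf_ne_node _ _ _ _ _)

end Lemmas2

section Lemmas3

open PFunctor

/-- Positions of the ∞pede. -/
def GRel (t : StratProf Ag) : Prop :=
  (∃ n, t = pped n) ∨ (∃ n, t = piped n) ∨ (∃ u, t = leafP u)

lemma GRel_step (t : StratProf Ag) (ht : GRel t) :
    ∀ a c s₁ s₂, t = nodeP a c s₁ s₂ → GRel s₁ ∧ GRel s₂ := by
  intro a c s₁ s₂ he
  rcases ht with ⟨n, rfl⟩ | ⟨n, rfl⟩ | ⟨u, rfl⟩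
  · rw [pped_eq] at he
    obtain ⟨_, _, h1, h2⟩ := nodeP_inj he
    exact ⟨Or.inr (Or.inr ⟨_, h1.symm⟩), Or.inr (Or.inl ⟨n, h2.symm⟩)⟩
  · rw [piped_eq] at he
    obtain ⟨_, _, h1, h2⟩ := nodeP_inj he
    exact ⟨Or.inr (Or.inr ⟨_, h1.symm⟩), Or.inl ⟨n + 1, h2.symm⟩⟩
  · exact absurd he (leaf_ne_node _ _ _ _ _)

lemma GRel_conv (t : StratProf Ag) (ht : GRel t) : Conv t := by
  rcases ht with ⟨n, rfl⟩ | ⟨n, rfl⟩ | ⟨u, rfl⟩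
  · rw [pped_eq]; exact Conv.node1 _ _ _ (Conv.leaf _)
  · rw [piped_eq]; exact Conv.node1 _ _ _ (Conv.leaf _)
  · exact Conv.leaf u

lemma GRel_alwaysConv (t : StratProf Ag) (ht : GRel t) : Always Conv t :=
  ⟨GRel, ht, fun t' ht' => ⟨GRel_conv t' ht', GRel_step t' ht'⟩⟩

lemma two_pow_lt (k : ℕ) : (2 : ℝ) ^ k < 2 ^ (k + 1) := by
  have : (1 : ℝ) < 2 := one_lt_two
  calc (2 : ℝ) ^ k < 2 ^ k * 2 := by nlinarith [pow_pos (zero_lt_two (α := ℝ)) k]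
  _ = 2 ^ (k + 1) := (pow_succ 2 k).symm

lemma GRel_PE (t : StratProf Ag) (ht : GRel t) : PE t := by
  refine ⟨GRel_alwaysConv t ht, ?_, ?_⟩
  · intro a s₁ s₂ he
    rcases ht with ⟨n, rfl⟩ | ⟨n, rfl⟩ | ⟨u, rfl⟩
    · rw [pped_eq] at he
      obtain ⟨ha, _, h1, h2⟩ := nodeP_inj he
      rw [← h1, ← h2, ← ha, util_leaf, util_eq (utilR_piped n)]
      show uAp n Ag.A ≥ uBp n Ag.A
      exact le_of_lt (two_pow_lt (2 * n + 1))
    · rw [piped_eq] at he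
      obtain ⟨ha, _, h1, h2⟩ := nodeP_inj he
      rw [← h1, ← h2, ← ha, util_leaf, util_eq (utilR_pped (n + 1))]
      show uBp n Ag.B ≥ uAp (n + 1) Ag.B
      show (2 : ℝ) ^ (2 * n + 3) ≥ 2 ^ (2 * (n + 1))
      have h23 : 2 * (n + 1) = 2 * n + 2 := by ring
      rw [h23]
      exact le_of_lt (two_pow_lt (2 * n + 2))
    · exact absurd he (leaf_ne_node _ _ _ _ _)
  · intro a s₁ s₂ he
    rcases ht with ⟨n, rfl⟩ | ⟨n, rfl⟩ | ⟨u, rfl⟩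
    · rw [pped_eq] at he
      obtain ⟨_, hc, _, _⟩ := nodeP_inj he
      exact absurd hc (by simp)
    · rw [piped_eq] at he
      obtain ⟨_, hc, _, _⟩ := nodeP_inj he
      exact absurd hc (by simp)
    · exact absurd he (leaf_ne_node _ _ _ _ _)

lemma spe_pped (n : ℕ) : SPE (pped n) :=
  ⟨GRel, Or.inl ⟨n, rfl⟩, fun t' ht' => ⟨GRel_PE t' ht', GRel_step t' ht'⟩⟩

lemma sameGame_refl (t : StratProf Ag) : SameGame t t := by
  refine ⟨fun x y => x = y, rfl, ?_⟩
  rintro x y rfl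
  rcases strat_cases x with ⟨u, rfl⟩ | ⟨a, c, s₁, s₂, rfl⟩
  · exact Or.inl ⟨u, rfl, rfl⟩
  · exact Or.inr ⟨a, c, c, s₁, s₂, s₁, s₂, rfl, rfl, rfl, rfl⟩

/-- Key lemma: any SPE of a subgame of the ∞pede takes at the root. -/
lemma key {s : StratProf Ag} (h : Conv s) :
    (∀ n, SPE s → SameGame s (pped n) →
      ∃ s₂, s = nodeP Ag.A Choice.one (leafP (uAp n)) s₂ ∧ util s = uAp n) ∧
    (∀ n, SPE s → SameGame s (piped n) →
      ∃ s₂, s = nodeP Ag.B Choice.one (leafP (uBp n)) s₂ ∧ util s = uBp n) := by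
  induction h with
  | leaf u =>
    constructor
    · intro n _ hsg
      rw [pped_eq] at hsg
      obtain ⟨c, t₁, t₂, hs, _, _⟩ := sameGame_node_inv hsg
      exact absurd hs (leaf_ne_node _ _ _ _ _)
    · intro n _ hsg
      rw [piped_eq] at hsg
      obtain ⟨c, t₁, t₂, hs, _, _⟩ := sameGame_node_inv hsg
      exact absurd hs (leaf_ne_node _ _ _ _ _)
  | node1 a s₁ s₂ hc ih =>
    constructor
    · intro n _ hsg
      rw [pped_eq] at hsg
      obtain ⟨c, t₁, t₂, hs, hg1, hg2⟩ := sameGame_node_inv hsg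
      obtain ⟨ha, hcc, h1, h2⟩ := nodeP_inj hs
      subst ha
      rw [← h1] at hg1
      have hl : s₁ = leafP (uAp n) := sameGame_leaf_inv hg1
      refine ⟨s₂, by rw [hl], ?_⟩
      exact util_eq (hl ▸ UtilR.node1 _ _ _ _ (hl ▸ UtilR.leaf (uAp n)))
    · intro n _ hsg
      rw [piped_eq] at hsg
      obtain ⟨c, t₁, t₂, hs, hg1, hg2⟩ := sameGame_node_inv hsg
      obtain ⟨ha, hcc, h1, h2⟩ := nodeP_inj hs
      subst ha
      rw [← h1] at hg1
      have hl : s₁ = leafP (uBp n) := sameGame_leaf_inv hg1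
      refine ⟨s₂, by rw [hl], ?_⟩
      exact util_eq (hl ▸ UtilR.node1 _ _ _ _ (hl ▸ UtilR.leaf (uBp n)))
  | node2 a s₁ s₂ hc ih =>
    constructor
    · intro n hspe hsg
      exfalso
      rw [pped_eq] at hsg
      obtain ⟨c, t₁, t₂, hs, hg1, hg2⟩ := sameGame_node_inv hsg
      obtain ⟨ha, hcc, h1, h2⟩ := nodeP_inj hs
      subst ha
      rw [← h1] at hg1
      rw [← h2] at hg2
      have hl : s₁ = leafP (uAp n) := sameGame_leaf_inv hg1
      have hspe2 : SPE s₂ := (spe_children hspe).2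
      have hu2 : util s₂ = uBp n := (ih.2 n hspe2 hg2).choose_spec.2
      have hpe : PE (nodeP Ag.A Choice.two s₁ s₂) := always_self hspe
      have hge : util s₂ Ag.A ≥ util s₁ Ag.A := hpe.2.2 Ag.A s₁ s₂ rfl
      rw [hu2, hl, util_leaf] at hge
      have hlt : uBp n Ag.A < uAp n Ag.A := two_pow_lt (2 * n + 1)
      exact absurd hge (not_le.mpr hlt)
    · intro n hspe hsg
      exfalso
      rw [piped_eq] at hsg
      obtain ⟨c, t₁, t₂, hs, hg1, hg2⟩ := sameGame_node_inv hsg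
      obtain ⟨ha, hcc, h1, h2⟩ := nodeP_inj hs
      subst ha
      rw [← h1] at hg1
      rw [← h2] at hg2
      have hl : s₁ = leafP (uBp n) := sameGame_leaf_inv hg1
      have hspe2 : SPE s₂ := (spe_children hspe).2
      have hu2 : util s₂ = uAp (n + 1) := (ih.1 (n + 1) hspe2 hg2).choose_spec.2
      have hpe : PE (nodeP Ag.B Choice.two s₁ s₂) := always_self hspe
      have hge : util s₂ Ag.B ≥ util s₁ Ag.B := hpe.2.2 Ag.B s₁ s₂ rfl
      rw [hu2, hl, util_leaf] at hge
      have hlt : uAp (n + 1) Ag.B < uBp n Ag.B := by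
        show (2 : ℝ) ^ (2 * (n + 1)) < 2 ^ (2 * n + 3)
        have h23 : 2 * (n + 1) = 2 * n + 2 := by ring
        rw [h23]
        exact two_pow_lt (2 * n + 2)
      exact absurd hge (not_le.mpr hlt)

end Lemmas3

/-- `p_0` is the unique subgame perfect equilibrium of the ∞pede: for every
strategy profile `s`, `s =_g p_0 ∧ SPE(s)` iff `s = p_0`. -/
theorem pped_zero_unique_spe (s : StratProf Ag) :
    (SameGame s (pped 0) ∧ SPE s) ↔ s = pped 0 := by
  constructor
  · rintro ⟨hsg, hspe⟩
    let BR : StratProf Ag → StratProf Ag → Prop := fun x y =>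
      (SPE x ∧ ((∃ n, SameGame x (pped n) ∧ y = pped n) ∨
                (∃ n, SameGame x (piped n) ∧ y = piped n))) ∨
      (∃ u, x = leafP u ∧ y = leafP u)
    refine PFunctor.M.bisim BR ?_ s (pped 0) (Or.inl ⟨hspe, Or.inl ⟨0, hsg, rfl⟩⟩)
    rintro x y (⟨hx, ⟨n, hg, rfl⟩ | ⟨n, hg, rfl⟩⟩ | ⟨u, rfl, rfl⟩)
    · obtain ⟨s₂, hxeq, _⟩ := (key (conv_of_spe hx)).1 n hx hg
      rw [pped_eq] at hg
      obtain ⟨c, t₁, t₂, hs, hg1, hg2⟩ := sameGame_node_inv hg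
      rw [hxeq] at hs
      obtain ⟨_, _, h1, h2⟩ := nodeP_inj hs
      rw [← h2] at hg2
      rw [hxeq] at hx
      have hspe2 : SPE s₂ := (spe_children hx).2
      refine ⟨Sum.inr (Ag.A, Choice.one),
        (fun b => bif b then s₂ else leafP (uAp n)),
        (fun b => bif b then piped n else leafP (uAp n)), ?_, ?_, ?_⟩
      · rw [hxeq]; exact dest_nodeP _ _ _ _
      · conv_lhs => rw [pped_eq]
        exact dest_nodeP _ _ _ _
      · intro i
        cases i
        · exact Or.inr ⟨uAp n, rfl, rfl⟩
        · exact Or.inl ⟨hspe2, Or.inr ⟨n, hg2, rfl⟩⟩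
    · obtain ⟨s₂, hxeq, _⟩ := (key (conv_of_spe hx)).2 n hx hg
      rw [piped_eq] at hg
      obtain ⟨c, t₁, t₂, hs, hg1, hg2⟩ := sameGame_node_inv hg
      rw [hxeq] at hs
      obtain ⟨_, _, h1, h2⟩ := nodeP_inj hs
      rw [← h2] at hg2
      rw [hxeq] at hx
      have hspe2 : SPE s₂ := (spe_children hx).2
      refine ⟨Sum.inr (Ag.B, Choice.one),
        (fun b => bif b then s₂ else leafP (uBp n)),
        (fun b => bif b then pped (n + 1) else leafP (uBp n)), ?_, ?_, ?_⟩
      · rw [hxeq]; exact dest_nodeP _ _ _ _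
      · conv_lhs => rw [piped_eq]
        exact dest_nodeP _ _ _ _
      · intro i
        cases i
        · exact Or.inr ⟨uBp n, rfl, rfl⟩
        · exact Or.inl ⟨hspe2, Or.inl ⟨n + 1, hg2, rfl⟩⟩
    · exact ⟨Sum.inl u, (fun e => Empty.elim e), (fun e => Empty.elim e),
        dest_leafP u, dest_leafP u, fun i => i.elim⟩
  · rintro rfl
    exact ⟨sameGame_refl _, spe_pped 0⟩
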